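/- Under the hypotheses of the majorization principle — X a real Banach space, x₀ ∈ X, R > 0, A satisfying the variable Lipschitz condition on B[x₀,R] with continuous nonnegative k, a = ‖A x₀ − x₀‖, a₊(r) = a + ∫₀^r k(t) dt having smallest fixed point r* in [0,R] — let r_n be defined by r₀ = 0, r_{n+1} = a₊(r_n). Let ξ₀ ∈ B[x₀,R] with ρ₀ = ‖ξ₀ − x₀‖ and assume either ρ₀ ≤ r* or a₊(s) < s for all s with r* < s ≤ ρ₀; set ρ_{n+1} = a₊(ρ_n) and ξ_{n+1} = A ξ_n. Then for all n the estimate ‖ξ_{n+1} − ξ_n‖ ≤ ρ_{n+1} + ρ_n − 2 r_n holds. -/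

import Mathlib

lemma segment_integral_bound
    {X : Type*} [NormedAddCommGroup X] [NormedSpace ℝ X]
    (x₀ : X) (R : ℝ) (A : X → X) (k : ℝ → ℝ)
    (hk_cont : ContinuousOn k (Set.Icc 0 R))
    (hk_nonneg : ∀ t ∈ Set.Icc (0 : ℝ) R, 0 ≤ k t)
    (hLip : ∀ x₁ x₂ : X, ∀ r : ℝ, ‖x₁ - x₀‖ ≤ r → ‖x₂ - x₀‖ ≤ r →
      0 < r → r ≤ R → ‖A x₁ - A x₂‖ ≤ k r * ‖x₁ - x₂‖)
    (u v : X) (p q : ℝ) (hp : 0 ≤ p) (hpq : p ≤ q) (hqR : q ≤ R)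
    (h1 : ‖u - x₀‖ ≤ p) (h2 : ‖v - u‖ ≤ q - p) :
    ‖A v - A u‖ ≤ ∫ t in p..q, k t := by
  have hInt : ∀ s t : ℝ, 0 ≤ s → s ≤ t → t ≤ R → IntervalIntegrable k MeasureTheory.volume s t := by
    intro s t hs hst htR
    apply (hk_cont.mono ?_).intervalIntegrable
    rw [Set.uIcc_of_le hst]
    exact Set.Icc_subset_Icc hs htR
  rcases eq_or_lt_of_le hpq with heq | hlt
  · subst heq
    have hvu : v = u := by
      have h0 : ‖v - u‖ ≤ 0 := by linarith
      exact sub_eq_zero.mp (norm_le_zero_iff.mp h0)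
    simp [hvu]
  · -- p < q
    apply le_of_forall_pos_le_add
    intro ε hε
    have hqp : 0 < q - p := by linarith
    set ε' : ℝ := ε / (q - p) with hε'def
    have hε' : 0 < ε' := div_pos hε hqp
    have huc : UniformContinuousOn k (Set.Icc 0 R) :=
      (isCompact_Icc).uniformContinuousOn_of_continuous hk_cont
    obtain ⟨δ, hδ, hδ'⟩ := Metric.uniformContinuousOn_iff.mp huc ε' hε'
    obtain ⟨N, hN⟩ := exists_nat_gt ((q - p) / δ)
    have hNpos : (0 : ℝ) < N := lt_trans (div_pos hqp hδ) hN
    have hNne : (N : ℝ) ≠ 0 := ne_of_gt hNpos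
    set Δ : ℝ := (q - p) / N with hΔdef
    have hΔpos : 0 < Δ := div_pos hqp hNpos
    have hΔδ : Δ < δ := by
      rw [hΔdef, div_lt_iff₀ hNpos]
      rw [div_lt_iff₀ hδ] at hN
      linarith
    set t : ℕ → ℝ := fun i => p + ((i : ℝ) / N) * (q - p) with htdef
    set z : ℕ → X := fun i => u + ((i : ℝ) / N) • (v - u) with hzdef
    have ht0 : t 0 = p := by simp [htdef]
    have htN : t N = q := by simp only [htdef, div_self hNne, one_mul]; ring
    have hz0 : z 0 = u := by simp [hzdef]
    have hzN : z N = v := by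
      simp only [hzdef, div_self hNne, one_smul]; abel
    have htstep : ∀ i : ℕ, t (i + 1) - t i = Δ := by
      intro i
      simp only [htdef, hΔdef]
      push_cast
      field_simp
      ring
    have htmono : ∀ i : ℕ, t i ≤ t (i + 1) := by
      intro i; have := htstep i; linarith [hΔpos]
    have htle : ∀ i : ℕ, i ≤ N → t i ≤ q := by
      intro i hi
      have h1' : (i : ℝ) / N ≤ 1 := by
        rw [div_le_one hNpos]; exact_mod_cast hi
      have : ((i : ℝ) / N) * (q - p) ≤ 1 * (q - p) :=
        mul_le_mul_of_nonneg_right h1' (le_of_lt hqp)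
      simp only [htdef]; linarith
    have htnn : ∀ i : ℕ, p ≤ t i := by
      intro i
      have : 0 ≤ ((i : ℝ) / N) * (q - p) :=
        mul_nonneg (div_nonneg (Nat.cast_nonneg i) (le_of_lt hNpos)) (le_of_lt hqp)
      simp only [htdef]; linarith
    have htpos : ∀ i : ℕ, 0 < t (i + 1) := by
      intro i
      have h1' := htstep i
      have h2' := htnn i
      linarith
    have hzdist : ∀ i : ℕ, i ≤ N → ‖z i - x₀‖ ≤ t i := by
      intro i hi
      have hc : (0:ℝ) ≤ (i : ℝ) / N := div_nonneg (Nat.cast_nonneg i) (le_of_lt hNpos)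
      have hc1 : (i : ℝ) / N ≤ 1 := by
        rw [div_le_one hNpos]; exact_mod_cast hi
      have : z i - x₀ = (u - x₀) + ((i : ℝ) / N) • (v - u) := by
        simp only [hzdef]; abel
      rw [this]
      calc ‖(u - x₀) + ((i : ℝ) / N) • (v - u)‖
          ≤ ‖u - x₀‖ + ‖((i : ℝ) / N) • (v - u)‖ := norm_add_le _ _
        _ = ‖u - x₀‖ + ((i : ℝ) / N) * ‖v - u‖ := by
            rw [norm_smul, Real.norm_of_nonneg hc]
        _ ≤ p + ((i : ℝ) / N) * (q - p) := by
            have := mul_le_mul_of_nonneg_left h2 hc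
            linarith
    have hzstep : ∀ i : ℕ, ‖z (i + 1) - z i‖ ≤ Δ := by
      intro i
      have hzz : z (i + 1) - z i = ((1 : ℝ) / N) • (v - u) := by
        have : (((i : ℕ) + 1 : ℕ) : ℝ) / N - (i : ℝ) / N = 1 / N := by
          push_cast; ring
        calc z (i + 1) - z i = ((((i : ℕ) + 1 : ℕ) : ℝ) / N - (i : ℝ) / N) • (v - u) := by
              simp only [hzdef, sub_smul]; abel
          _ = ((1 : ℝ) / N) • (v - u) := by rw [this]
      rw [hzz, norm_smul, Real.norm_of_nonneg (by positivity)]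
      calc (1 / (N:ℝ)) * ‖v - u‖ ≤ (1 / (N:ℝ)) * (q - p) := by
            apply mul_le_mul_of_nonneg_left h2 (by positivity)
        _ = Δ := by rw [hΔdef]; ring
    -- key per-step estimate
    have hstep : ∀ i : ℕ, i < N →
        ‖A (z (i + 1)) - A (z i)‖ ≤ (∫ s in t i..t (i + 1), k s) + ε' * Δ := by
      intro i hi
      have hi1 : i + 1 ≤ N := hi
      have hti1R : t (i + 1) ≤ R := le_trans (htle (i+1) hi1) hqR
      have hti1mem : t (i + 1) ∈ Set.Icc (0:ℝ) R := ⟨le_of_lt (htpos i), hti1R⟩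
      have hlip' : ‖A (z (i + 1)) - A (z i)‖ ≤ k (t (i + 1)) * Δ := by
        have := hLip (z (i+1)) (z i) (t (i+1))
          (hzdist (i+1) hi1)
          (le_trans (hzdist i (le_of_lt hi)) (htmono i))
          (htpos i) hti1R
        calc ‖A (z (i + 1)) - A (z i)‖ ≤ k (t (i+1)) * ‖z (i+1) - z i‖ := this
          _ ≤ k (t (i+1)) * Δ :=
              mul_le_mul_of_nonneg_left (hzstep i) (hk_nonneg _ hti1mem)
      have hconst : (k (t (i + 1)) - ε') * Δ ≤ ∫ s in t i..t (i + 1), k s := by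
        have hmono' : ∀ s ∈ Set.Icc (t i) (t (i + 1)), k (t (i + 1)) - ε' ≤ k s := by
          intro s hs
          have hsmem : s ∈ Set.Icc (0:ℝ) R := by
            constructor
            · linarith [htnn i, hs.1, hp]
            · linarith [hs.2, hti1R]
          have hdist : dist (t (i + 1)) s < δ := by
            rw [Real.dist_eq, abs_lt]
            have := htstep i
            constructor <;> [linarith [hs.2, hΔδ]; linarith [hs.1, hΔδ]]
          have := hδ' (t (i+1)) hti1mem s hsmem hdist
          rw [Real.dist_eq, abs_lt] at this
          linarith [this.1]
        have hii : IntervalIntegrable k MeasureTheory.volume (t i) (t (i + 1)) :=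
          hInt _ _ (by linarith [htnn i]) (htmono i) hti1R
        have := intervalIntegral.integral_mono_on (htmono i)
          (intervalIntegrable_const) hii (fun s hs => hmono' s hs)
        rw [intervalIntegral.integral_const, smul_eq_mul, htstep i, mul_comm] at this
        exact this
      linarith
    -- telescoping
    have htele : A v - A u = ∑ i ∈ Finset.range N, (A (z (i + 1)) - A (z i)) := by
      rw [Finset.sum_range_sub (fun i => A (z i)), hz0, hzN]
    have hsumint : ∑ i ∈ Finset.range N, (∫ s in t i..t (i + 1), k s) = ∫ s in p..q, k s := by
      rw [← ht0, ← htN]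
      apply intervalIntegral.sum_integral_adjacent_intervals
      intro i hi
      exact hInt _ _ (by linarith [htnn i, hp]) (htmono i)
        (le_trans (htle (i+1) hi) hqR)
    calc ‖A v - A u‖ ≤ ∑ i ∈ Finset.range N, ‖A (z (i + 1)) - A (z i)‖ := by
          rw [htele]; exact norm_sum_le _ _
      _ ≤ ∑ i ∈ Finset.range N, ((∫ s in t i..t (i + 1), k s) + ε' * Δ) :=
          Finset.sum_le_sum (fun i hi => hstep i (Finset.mem_range.mp hi))
      _ = (∫ s in p..q, k s) + N * (ε' * Δ) := by
          rw [Finset.sum_add_distrib, hsumint, Finset.sum_const, Finset.card_range,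
            nsmul_eq_mul]
      _ = (∫ s in p..q, k s) + ε := by
          rw [hε'def, hΔdef]
          field_simp

/-- A posteriori estimate for consecutive approximations from a general
initial point: `‖ξ_{n+1} - ξ_n‖ ≤ ρ_{n+1} + ρ_n - 2 r_n` for all `n`. -/
theorem successive_approximations_consecutive_estimate
    {X : Type*} [NormedAddCommGroup X] [NormedSpace ℝ X] [CompleteSpace X]
    (x₀ : X) (R : ℝ) (hR : 0 < R) (A : X → X) (k : ℝ → ℝ)
    (hk_cont : ContinuousOn k (Set.Icc 0 R))
    (hk_nonneg : ∀ t ∈ Set.Icc (0 : ℝ) R, 0 ≤ k t)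
    (hLip : ∀ x₁ x₂ : X, ∀ r : ℝ, ‖x₁ - x₀‖ ≤ r → ‖x₂ - x₀‖ ≤ r →
      0 < r → r ≤ R → ‖A x₁ - A x₂‖ ≤ k r * ‖x₁ - x₂‖)
    (a : ℝ) (ha : a = ‖A x₀ - x₀‖)
    (aplus : ℝ → ℝ) (haplus : ∀ r : ℝ, aplus r = a + ∫ t in (0 : ℝ)..r, k t)
    (rstar : ℝ) (hrstar_mem : rstar ∈ Set.Icc (0 : ℝ) R)
    (hrstar_fix : aplus rstar = rstar)
    (hrstar_min : ∀ s ∈ Set.Icc (0 : ℝ) R, aplus s = s → rstar ≤ s)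
    (r : ℕ → ℝ) (hr0 : r 0 = 0) (hr_succ : ∀ n : ℕ, r (n + 1) = aplus (r n))
    (ξ : ℕ → X) (hξ0 : ‖ξ 0 - x₀‖ ≤ R) (hξ_succ : ∀ n : ℕ, ξ (n + 1) = A (ξ n))
    (ρ : ℕ → ℝ) (hρ0 : ρ 0 = ‖ξ 0 - x₀‖) (hρ_succ : ∀ n : ℕ, ρ (n + 1) = aplus (ρ n))
    (hadm : ρ 0 ≤ rstar ∨ ∀ s : ℝ, rstar < s → s ≤ ρ 0 → aplus s < s) :
    ∀ n : ℕ, ‖ξ (n + 1) - ξ n‖ ≤ ρ (n + 1) + ρ n - 2 * r n := by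
  have ha_nn : 0 ≤ a := ha ▸ norm_nonneg _
  have hInt : ∀ s t : ℝ, 0 ≤ s → s ≤ t → t ≤ R →
      IntervalIntegrable k MeasureTheory.volume s t := by
    intro s t hs hst htR
    apply (hk_cont.mono ?_).intervalIntegrable
    rw [Set.uIcc_of_le hst]
    exact Set.Icc_subset_Icc hs htR
  have hdiff : ∀ s t : ℝ, 0 ≤ s → s ≤ t → t ≤ R →
      aplus t - aplus s = ∫ x in s..t, k x := by
    intro s t hs hst htR
    rw [haplus s, haplus t]
    have := intervalIntegral.integral_add_adjacent_intervals
      (hInt 0 s le_rfl hs (hst.trans htR)) (hInt s t hs hst htR)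
    linarith
  have hint_nn : ∀ s t : ℝ, 0 ≤ s → s ≤ t → t ≤ R → 0 ≤ ∫ x in s..t, k x := by
    intro s t hs hst htR
    apply intervalIntegral.integral_nonneg hst
    intro x hx
    exact hk_nonneg x ⟨hs.trans hx.1, hx.2.trans htR⟩
  have hmono : ∀ s t : ℝ, 0 ≤ s → s ≤ t → t ≤ R → aplus s ≤ aplus t := by
    intro s t hs hst htR
    have h1 := hdiff s t hs hst htR
    have h2 := hint_nn s t hs hst htR
    linarith
  have hrstarR : rstar ≤ R := hrstar_mem.2
  have hrstar0 : 0 ≤ rstar := hrstar_mem.1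
  -- r n bounds
  have hrb : ∀ n, 0 ≤ r n ∧ r n ≤ rstar := by
    intro n
    induction n with
    | zero => exact ⟨le_of_eq hr0.symm, hr0 ▸ hrstar0⟩
    | succ n ih =>
      constructor
      · rw [hr_succ, haplus]
        have := hint_nn 0 (r n) le_rfl ih.1 (ih.2.trans hrstarR)
        simpa using by linarith
      · rw [hr_succ, ← hrstar_fix]
        exact hmono _ _ ih.1 ih.2 hrstarR
  have hrmono : ∀ n, r n ≤ r (n + 1) := by
    intro n
    induction n with
    | zero =>
      rw [hr0, hr_succ, hr0, haplus]
      simpa using by linarith [ha_nn]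
    | succ n ih =>
      rw [hr_succ n, hr_succ (n+1)]
      exact hmono _ _ (hrb n).1 ih ((hrb (n+1)).2.trans hrstarR)
  -- ρ n bounds
  have hρ0nn : 0 ≤ ρ 0 := hρ0 ▸ norm_nonneg _
  have hρ0R : ρ 0 ≤ R := hρ0 ▸ hξ0
  set M : ℝ := max rstar (ρ 0) with hMdef
  have hMR : M ≤ R := max_le hrstarR hρ0R
  have hρb : ∀ n, r n ≤ ρ n ∧ ρ n ≤ M := by
    intro n
    induction n with
    | zero => exact ⟨hr0 ▸ hρ0nn, le_max_right _ _⟩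
    | succ n ih =>
      have hρnn : 0 ≤ ρ n := le_trans (hrb n).1 ih.1
      have hρnR : ρ n ≤ R := ih.2.trans hMR
      constructor
      · rw [hr_succ, hρ_succ]
        exact hmono _ _ (hrb n).1 ih.1 hρnR
      · rw [hρ_succ]
        rcases le_or_gt (ρ n) rstar with h | h
        · exact le_trans (hrstar_fix ▸ hmono _ _ hρnn h hrstarR) (le_max_left _ _)
        · rcases hadm with hadm | hadm
          · exact absurd (ih.2.trans_eq (max_eq_left hadm)) (not_le.mpr h)
          · have hρρ0 : ρ n ≤ ρ 0 := by
              rcases le_or_gt (ρ 0) rstar with h0 | h0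
              · exact absurd (ih.2.trans_eq (max_eq_left h0)) (not_le.mpr h)
              · exact ih.2.trans_eq (max_eq_right (le_of_lt h0))
            exact le_trans (le_of_lt (hadm _ h hρρ0)) (ih.2)
  -- the main sequence x from x₀
  set x : ℕ → X := fun n => Nat.rec x₀ (fun _ xn => A xn) n with hxdef
  have hx0 : x 0 = x₀ := rfl
  have hx_succ : ∀ n, x (n + 1) = A (x n) := fun n => rfl
  have hseg := segment_integral_bound x₀ R A k hk_cont hk_nonneg hLip
  -- main induction
  have hS : ∀ n : ℕ, ‖x n - x₀‖ ≤ r n ∧ ‖x (n + 1) - x n‖ ≤ r (n + 1) - r n ∧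
      ‖ξ n - x n‖ ≤ ρ n - r n := by
    intro n
    induction n with
    | zero =>
      refine ⟨by simp [hx0, hr0], ?_, by simp [hx0, hρ0, hr0]⟩
      rw [hx_succ, hx0, hr_succ, hr0, haplus]
      simp [← ha]
    | succ n ih =>
      obtain ⟨ih1, ih2, ih3⟩ := ih
      have hrn0 : 0 ≤ r n := (hrb n).1
      have hrn1R : r (n + 1) ≤ R := (hrb (n+1)).2.trans hrstarR
      have hd1 : ‖x (n + 1) - x₀‖ ≤ r (n + 1) := by
        calc ‖x (n + 1) - x₀‖ ≤ ‖x (n + 1) - x n‖ + ‖x n - x₀‖ := by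
              have : x (n+1) - x₀ = (x (n+1) - x n) + (x n - x₀) := by abel
              rw [this]; exact norm_add_le _ _
          _ ≤ (r (n + 1) - r n) + r n := add_le_add ih2 ih1
          _ = r (n + 1) := by ring
      refine ⟨hd1, ?_, ?_⟩
      · have := hseg (x n) (x (n+1)) (r n) (r (n+1)) hrn0 (hrmono n) hrn1R ih1 ih2
        rw [← hdiff _ _ hrn0 (hrmono n) hrn1R, ← hr_succ (n+1), ← hr_succ n] at this
        exact this
      · rw [hξ_succ]
        have hρnR : ρ n ≤ R := (hρb n).2.trans hMR
        have := hseg (x n) (ξ n) (r n) (ρ n) hrn0 (hρb n).1 hρnR ih1 ih3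
        rw [← hdiff _ _ hrn0 (hρb n).1 hρnR, ← hρ_succ, ← hr_succ] at this
        exact this
  intro n
  obtain ⟨_, _, h3⟩ := hS n
  obtain ⟨_, _, h3'⟩ := hS (n + 1)
  obtain ⟨_, h2, _⟩ := hS n
  calc ‖ξ (n + 1) - ξ n‖
      ≤ ‖ξ (n + 1) - x (n + 1)‖ + ‖x (n + 1) - x n‖ + ‖x n - ξ n‖ := by
        have : ξ (n+1) - ξ n = (ξ (n+1) - x (n+1)) + (x (n+1) - x n) + (x n - ξ n) := by abel
        rw [this]
        exact (norm_add_le _ _).trans (add_le_add_left (norm_add_le _ _) _)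
    _ ≤ (ρ (n + 1) - r (n + 1)) + (r (n + 1) - r n) + (ρ n - r n) := by
        have hx3 : ‖x n - ξ n‖ = ‖ξ n - x n‖ := norm_sub_rev _ _
        rw [hx3]
        exact add_le_add (add_le_add h3' h2) h3
    _ = ρ (n + 1) + ρ n - 2 * r n := by ring
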